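/- Failure of stationarity: for every field K and every K-bilinear space C, there is a K-bilinear space V extending C containing vectors a, a', b such that a, a', b are linearly independent over C, there is a bilinear automorphism-style identification giving a and a' the same Galois type over C (i.e. there exist bilinear monomorphisms from V into a common bilinear space agreeing on C and sending a to a'), yet [a, b] = 0 while [a', b] = 1, so no pair of bilinear monomorphisms agreeing on C ∪ {b} can identify a with a'. -/
import Mathlib


universe u

namespace StatFail

variable {K : Type u} [Field K] {C : Type u} [AddCommGroup C] [Module K C]

/-- extension map (Fin 3 → K) → (Fin 4 → K) for g -/
def E : (Fin 3 → K) →ₗ[K] (Fin 4 → K) where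
  toFun u := ![u 0, u 1, u 2, 0]
  map_add' u v := by funext j; fin_cases j <;> simp
  map_smul' c u := by funext j; fin_cases j <;> simp

/-- twisted map for h: a ↦ a', a' ↦ a, b ↦ new vector e₃ -/
def H : (Fin 3 → K) →ₗ[K] (Fin 4 → K) where
  toFun u := ![u 1, u 0, 0, u 2]
  map_add' u v := by funext j; fin_cases j <;> simp
  map_smul' c u := by funext j; fin_cases j <;> simp

def BV (BC : C →ₗ[K] C →ₗ[K] K) :
    (C × (Fin 3 → K)) →ₗ[K] (C × (Fin 3 → K)) →ₗ[K] K :=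
  LinearMap.mk₂ K (fun p q => BC p.1 q.1 + p.2 1 * q.2 2)
    (by intros; simp [add_mul]; ring)
    (by intros; simp [smul_eq_mul]; ring)
    (by intros; simp [mul_add]; ring)
    (by intros; simp [smul_eq_mul]; ring)

def BW (BC : C →ₗ[K] C →ₗ[K] K) :
    (C × (Fin 4 → K)) →ₗ[K] (C × (Fin 4 → K)) →ₗ[K] K :=
  LinearMap.mk₂ K (fun p q => BC p.1 q.1 + p.2 1 * q.2 2 + p.2 0 * q.2 3)
    (by intros; simp [add_mul]; ring)
    (by intros; simp [smul_eq_mul]; ring)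
    (by intros; simp [mul_add]; ring)
    (by intros; simp [smul_eq_mul]; ring)

end StatFail

/-- Failure of stationarity: over any bilinear space `C` there is an extension `V`
containing `a, a', b`, linearly independent over `C`, such that `a` and `a'` have the same
Galois type over `C`, yet `[a, b] = 0` and `[a', b] = 1`, so `a` and `a'` cannot be
identified by bilinear monomorphisms agreeing on `C` and on `b`. -/
theorem stationarity_fails {K : Type u} [Field K] (C : Type u) [AddCommGroup C] [Module K C]
    (BC : C →ₗ[K] C →ₗ[K] K) :
    ∃ (V : Type u) (_ : AddCommGroup V) (_ : Module K V)
      (BV : V →ₗ[K] V →ₗ[K] K) (ι : C →ₗ[K] V) (a a' b : V),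
      Function.Injective ι ∧ (∀ x y : C, BV (ι x) (ι y) = BC x y) ∧
      LinearIndependent K ![a, a', b] ∧
      Submodule.span K {a, a', b} ⊓ LinearMap.range ι = ⊥ ∧
      BV a b = 0 ∧ BV a' b = 1 ∧
      (∃ (W : Type u) (_ : AddCommGroup W) (_ : Module K W)
        (BW : W →ₗ[K] W →ₗ[K] K) (g h : V →ₗ[K] W),
        Function.Injective g ∧ (∀ x y : V, BW (g x) (g y) = BV x y) ∧
        Function.Injective h ∧ (∀ x y : V, BW (h x) (h y) = BV x y) ∧
        g ∘ₗ ι = h ∘ₗ ι ∧ g a = h a') ∧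
      ¬ (∃ (W : Type u) (_ : AddCommGroup W) (_ : Module K W)
        (BW : W →ₗ[K] W →ₗ[K] K) (g h : V →ₗ[K] W),
        Function.Injective g ∧ (∀ x y : V, BW (g x) (g y) = BV x y) ∧
        Function.Injective h ∧ (∀ x y : V, BW (h x) (h y) = BV x y) ∧
        g ∘ₗ ι = h ∘ₗ ι ∧ g b = h b ∧ g a = h a') := by
  classical
  refine ⟨C × (Fin 3 → K), inferInstance, inferInstance, StatFail.BV BC,
    LinearMap.inl K C (Fin 3 → K),
    (0, Pi.single 0 1), (0, Pi.single 1 1), (0, Pi.single 2 1),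
    LinearMap.inl_injective, ?_, ?_, ?_, ?_, ?_, ?_, ?_⟩
  · intro x y
    simp [StatFail.BV]
  · rw [Fintype.linearIndependent_iff]
    intro g hg
    have h2 := congrArg Prod.snd hg
    simp [Fin.sum_univ_three] at h2
    intro i
    fin_cases i
    · simpa using congrFun h2 0
    · simpa using congrFun h2 1
    · simpa using congrFun h2 2
  · rw [Submodule.eq_bot_iff]
    rintro ⟨x, u⟩ ⟨hs, hr⟩
    have h1 : (x, u).1 = 0 := by
      have : Submodule.span K ({((0 : C), Pi.single (0:Fin 3) (1:K)),
          (0, Pi.single 1 1), (0, Pi.single 2 1)} : Set (C × (Fin 3 → K))) ≤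
          LinearMap.ker (LinearMap.fst K C (Fin 3 → K)) := by
        rw [Submodule.span_le]
        rintro p (rfl | rfl | rfl) <;> simp
      simpa using this hs
    obtain ⟨c, hc⟩ := hr
    have h2 : u = 0 := by
      have := congrArg Prod.snd hc
      simpa using this.symm
    simp at h1
    simp [h1, h2, Prod.ext_iff]
  · simp [StatFail.BV]
  · simp [StatFail.BV]
  · refine ⟨C × (Fin 4 → K), inferInstance, inferInstance, StatFail.BW BC,
      LinearMap.prodMap LinearMap.id StatFail.E,
      LinearMap.prodMap LinearMap.id StatFail.H, ?_, ?_, ?_, ?_, ?_, ?_⟩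
    · rintro ⟨x, u⟩ ⟨y, v⟩ huv
      obtain ⟨h1, h2⟩ := Prod.ext_iff.mp huv
      simp only [LinearMap.prodMap_apply, LinearMap.id_apply] at h1 h2
      refine Prod.ext h1 ?_
      funext i
      fin_cases i
      · simpa [StatFail.E] using congrFun h2 0
      · simpa [StatFail.E] using congrFun h2 1
      · simpa [StatFail.E] using congrFun h2 2
    · intro x y
      simp [StatFail.BW, StatFail.BV, StatFail.E]
    · rintro ⟨x, u⟩ ⟨y, v⟩ huv
      obtain ⟨h1, h2⟩ := Prod.ext_iff.mp huv
      simp only [LinearMap.prodMap_apply, LinearMap.id_apply] at h1 h2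
      refine Prod.ext h1 ?_
      funext i
      fin_cases i
      · simpa [StatFail.H] using congrFun h2 1
      · simpa [StatFail.H] using congrFun h2 0
      · simpa [StatFail.H] using congrFun h2 3
    · intro x y
      simp [StatFail.BW, StatFail.BV, StatFail.H]
    · apply LinearMap.ext
      intro x
      simp only [LinearMap.comp_apply, LinearMap.inl_apply, LinearMap.prodMap_apply,
        LinearMap.id_apply]
      refine Prod.ext rfl ?_
      funext i
      fin_cases i <;> simp [StatFail.E, StatFail.H]
    · refine Prod.ext rfl ?_
      funext i
      fin_cases i <;> simp [StatFail.E, StatFail.H]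
  · rintro ⟨W, _, _, BW, g, h, -, hgf, -, hhf, -, hb, ha⟩
    have h1 : BW (g (0, Pi.single 0 1)) (g (0, Pi.single 2 1)) = 0 := by
      rw [hgf]; simp [StatFail.BV]
    have h2 : BW (h (0, Pi.single 1 1)) (h (0, Pi.single 2 1)) = 1 := by
      rw [hhf]; simp [StatFail.BV]
    rw [ha, hb] at h1
    rw [h1] at h2
    exact zero_ne_one h2
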